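/- Let G be a group with a subgroup N of index 2 and a group isomorphism θ : N → ℤ × ℤ, and suppose that for every g ∈ G with g ∉ N, conjugation by g acts on N as the coordinate swap: θ(g·n·g⁻¹) = (b, a) whenever θ(n) = (a, b). Then there exists c ∈ G with c ∉ N and c² = e; that is, the extension splits and G is isomorphic to the semidirect product ℤ² ⋊ ℤ₂ with the swap action. -/

import Mathlib

/-- The swap automorphism `(a, b) ↦ (b, a)` of `ℤ × ℤ` (multiplicatively). -/
def swapAutZ2 : MulAut (Multiplicative (ℤ × ℤ)) :=
  AddEquiv.toMultiplicative (AddEquiv.prodComm : ℤ × ℤ ≃+ ℤ × ℤ)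

/-- The action of `ℤ₂` on `ℤ × ℤ` by the coordinate swap. -/
def swapActionZ2 : Multiplicative (ZMod 2) →* MulAut (Multiplicative (ℤ × ℤ)) :=
  MonoidHom.mk' (fun x => swapAutZ2 ^ (Multiplicative.toAdd x).val) (by
    have h2 : swapAutZ2 ^ 2 = 1 := by
      rw [sq]
      ext x <;> rfl
    intro a b
    show swapAutZ2 ^ (Multiplicative.toAdd (a * b)).val = _
    have hab : Multiplicative.toAdd (a * b) =
        Multiplicative.toAdd a + Multiplicative.toAdd b := rfl
    rw [hab, ZMod.val_add, ← pow_eq_pow_mod _ h2, pow_add])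

/-- Let `N` be an index-2 subgroup of `G` with an isomorphism `θ : N ≃ ℤ × ℤ`, and
suppose conjugation by every element outside `N` acts on `N` as the coordinate swap.
Then there is `c ∉ N` with `c² = e`: the extension splits, and `G` is isomorphic to
the semidirect product `ℤ² ⋊ ℤ₂` with the swap action. -/
theorem index_two_swap_action_splits
    {G : Type*} [Group G] (N : Subgroup G) (hidx : N.index = 2)
    (θ : N ≃* Multiplicative (ℤ × ℤ))
    (hconj : ∀ g : G, g ∉ N → ∀ (n : N) (h : g * (n : G) * g⁻¹ ∈ N),
      Multiplicative.toAdd (θ ⟨g * (n : G) * g⁻¹, h⟩) =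
        ((Multiplicative.toAdd (θ n)).2, (Multiplicative.toAdd (θ n)).1)) :
    (∃ c : G, c ∉ N ∧ c ^ 2 = 1) ∧
      Nonempty (G ≃* (Multiplicative (ℤ × ℤ) ⋊[swapActionZ2] Multiplicative (ZMod 2))) := by
  classical
  have hmul : ∀ {x y : G}, x * y ∈ N ↔ (x ∈ N ↔ y ∈ N) := fun {x y} =>
    Subgroup.mul_mem_iff_of_index_two hidx
  obtain ⟨g₀, hg₀⟩ : ∃ g : G, g ∉ N := by
    by_contra h
    push_neg at h
    have hN : N = ⊤ := (Subgroup.eq_top_iff' N).2 h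
    rw [hN, Subgroup.index_top] at hidx
    omega
  have hconjmem : ∀ (g : G) (n : N), g * (n : G) * g⁻¹ ∈ N := by
    intro g n
    rw [hmul, hmul]
    simp [n.2]
  have hg₀sq : g₀ ^ 2 ∈ N := Subgroup.sq_mem_of_index_two hidx g₀
  set a : ℤ × ℤ := Multiplicative.toAdd (θ ⟨g₀ ^ 2, hg₀sq⟩) with ha
  have haa : a.1 = a.2 := by
    have hmem := hconjmem g₀ ⟨g₀ ^ 2, hg₀sq⟩
    have h1 := hconj g₀ hg₀ ⟨g₀ ^ 2, hg₀sq⟩ hmem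
    have heq : (⟨g₀ * ((⟨g₀ ^ 2, hg₀sq⟩ : N) : G) * g₀⁻¹, hmem⟩ : N) = ⟨g₀ ^ 2, hg₀sq⟩ := by
      ext
      show g₀ * g₀ ^ 2 * g₀⁻¹ = g₀ ^ 2
      group
    rw [heq] at h1
    have := congrArg Prod.fst h1
    simpa using this
  set n : N := θ.symm (Multiplicative.ofAdd (-a.1, 0)) with hn
  set c : G := g₀ * n with hc
  have hcN : c ∉ N := by
    intro h
    apply hg₀
    have hg : g₀ = c * (n : G)⁻¹ := by rw [hc]; group
    rw [hg]
    exact N.mul_mem h (N.inv_mem n.2)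
  have hcsqN : c ^ 2 ∈ N := Subgroup.sq_mem_of_index_two hidx c
  have hg₀inv : g₀⁻¹ ∉ N := fun h => hg₀ (by simpa using N.inv_mem h)
  have hmem2 : g₀⁻¹ * (n : G) * g₀⁻¹⁻¹ ∈ N := hconjmem g₀⁻¹ n
  have hconjn := hconj g₀⁻¹ hg₀inv n hmem2
  have hθn : Multiplicative.toAdd (θ n) = (-a.1, 0) := by
    rw [hn, MulEquiv.apply_symm_apply, toAdd_ofAdd]
  have hdecomp : (⟨c ^ 2, hcsqN⟩ : N) =
      ⟨g₀ ^ 2, hg₀sq⟩ * ⟨g₀⁻¹ * (n : G) * g₀⁻¹⁻¹, hmem2⟩ * n := by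
    ext
    show c ^ 2 = g₀ ^ 2 * (g₀⁻¹ * (n : G) * g₀⁻¹⁻¹) * (n : G)
    rw [hc, sq]
    group
  have hθc : Multiplicative.toAdd (θ ⟨c ^ 2, hcsqN⟩) = 0 := by
    have hsplit : θ ⟨c ^ 2, hcsqN⟩ =
        θ ⟨g₀ ^ 2, hg₀sq⟩ * θ ⟨g₀⁻¹ * (n : G) * g₀⁻¹⁻¹, hmem2⟩ * θ n := by
      rw [hdecomp]; rw [map_mul, map_mul]
    rw [hsplit, toAdd_mul, toAdd_mul, hconjn, hθn, ← ha]
    rw [Prod.ext_iff]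
    constructor <;> simp <;> omega
  have hc2 : c ^ 2 = 1 := by
    have h1 : θ ⟨c ^ 2, hcsqN⟩ = 1 := by
      rw [← ofAdd_toAdd (θ ⟨c ^ 2, hcsqN⟩), hθc]; rfl
    have h2 : (⟨c ^ 2, hcsqN⟩ : N) = 1 := θ.injective (by rw [h1, map_one])
    simpa using Subtype.ext_iff.1 h2
  refine ⟨⟨c, hcN, hc2⟩, ?_⟩
  -- construct the isomorphism
  set f₁ : Multiplicative (ℤ × ℤ) →* G := N.subtype.comp θ.symm.toMonoidHom with hf₁
  set f₂ : Multiplicative (ZMod 2) →* G :=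
    MonoidHom.mk' (fun t => c ^ (Multiplicative.toAdd t).val) (by
      intro x y
      show c ^ (Multiplicative.toAdd (x * y)).val = _
      have hxy : Multiplicative.toAdd (x * y) =
          Multiplicative.toAdd x + Multiplicative.toAdd y := rfl
      rw [hxy, ZMod.val_add, ← pow_eq_pow_mod _ hc2, pow_add]) with hf₂
  have key : ∀ m : Multiplicative (ℤ × ℤ),
      c * ((θ.symm m : N) : G) * c⁻¹ = ((θ.symm (swapAutZ2 m) : N) : G) := by
    intro m
    have hmem := hconjmem c (θ.symm m)
    have h1 := hconj c hcN (θ.symm m) hmem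
    rw [MulEquiv.apply_symm_apply] at h1
    have h2 : θ (⟨c * ((θ.symm m : N) : G) * c⁻¹, hmem⟩ : N) = swapAutZ2 m := by
      rw [← ofAdd_toAdd (θ _), h1]; rfl
    calc c * ((θ.symm m : N) : G) * c⁻¹
        = ((⟨c * ((θ.symm m : N) : G) * c⁻¹, hmem⟩ : N) : G) := rfl
      _ = ((θ.symm (swapAutZ2 m) : N) : G) := by rw [← h2, MulEquiv.symm_apply_apply]
  have hvalcases : ∀ t : Multiplicative (ZMod 2),
      (Multiplicative.toAdd t).val = 0 ∨ (Multiplicative.toAdd t).val = 1 := by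
    intro t
    have := ZMod.val_lt (Multiplicative.toAdd t)
    omega
  have compat : ∀ t, f₁.comp (swapActionZ2 t).toMonoidHom =
      (MulAut.conj (f₂ t)).toMonoidHom.comp f₁ := by
    intro t
    ext m
    show ((θ.symm ((swapAutZ2 ^ (Multiplicative.toAdd t).val) m) : N) : G) =
      c ^ (Multiplicative.toAdd t).val * ((θ.symm m : N) : G) *
        (c ^ (Multiplicative.toAdd t).val)⁻¹
    rcases hvalcases t with h | h <;> rw [h]
    · simp; rfl
    · simpa using (key m).symm
  set Φ := SemidirectProduct.lift f₁ f₂ compat with hΦ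
  have hΦap : ∀ p : Multiplicative (ℤ × ℤ) ⋊[swapActionZ2] Multiplicative (ZMod 2),
      Φ p = ((θ.symm p.1 : N) : G) * c ^ (Multiplicative.toAdd p.2).val := fun p => rfl
  have hinj : Function.Injective Φ := by
    rw [injective_iff_map_eq_one]
    intro p hp
    rw [hΦap] at hp
    rcases hvalcases p.2 with h | h
    · have hp1 : ((θ.symm p.1 : N) : G) = 1 := by rw [h] at hp; simpa using hp
      have hl : p.1 = 1 := by
        have : (θ.symm p.1 : N) = 1 := Subtype.ext hp1
        have := congrArg θ this
        rwa [MulEquiv.apply_symm_apply, map_one] at this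
      have hr : p.2 = 1 := by
        have h0 : Multiplicative.toAdd p.2 = 0 := (ZMod.val_eq_zero _).1 h
        exact h0
      ext : 1
      · simpa using hl
      · simpa using hr
    · exfalso
      apply hcN
      rw [h, pow_one] at hp
      rw [eq_inv_of_mul_eq_one_right hp]
      exact N.inv_mem (θ.symm p.1).2
  have hsurj : Function.Surjective Φ := by
    intro g
    by_cases hg : g ∈ N
    · refine ⟨⟨θ ⟨g, hg⟩, 1⟩, ?_⟩
      rw [hΦap]
      show ((θ.symm (θ ⟨g, hg⟩) : N) : G) * c ^ (0 : ZMod 2).val = g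
      rw [MulEquiv.symm_apply_apply, ZMod.val_zero, pow_zero, mul_one]
    · have hcinv : c⁻¹ ∉ N := fun h => hcN (by simpa using N.inv_mem h)
      have hgc : g * c⁻¹ ∈ N := by
        rw [hmul]
        simp [hg, hcinv]
      refine ⟨⟨θ ⟨g * c⁻¹, hgc⟩, Multiplicative.ofAdd 1⟩, ?_⟩
      rw [hΦap]
      show ((θ.symm (θ ⟨g * c⁻¹, hgc⟩) : N) : G) * c ^ (1 : ZMod 2).val = g
      rw [MulEquiv.symm_apply_apply, ZMod.val_one, pow_one]
      show g * c⁻¹ * c = g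
      group
  exact ⟨(MulEquiv.ofBijective Φ ⟨hinj, hsurj⟩).symm⟩
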